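/- For every Cartesian tree T on m ≥ 2 nodes, the size of its swap neighbourhood satisfies m - 1 ≤ |ng(T)| ≤ 3(m-2) + 1. -/

import Mathlib

/-- Binary tree shapes (Cartesian trees are determined by their shape). -/
inductive BTree : Type
  | nil : BTree
  | node : BTree → BTree → BTree
deriving DecidableEq

namespace BTree

/-- Number of nodes. -/
def size : BTree → ℕ
  | nil => 0
  | node l r => size l + size r + 1

/-- Length of the leftmost path. -/
def LMP : BTree → ℕ
  | nil => 0
  | node l _ => LMP l + 1

/-- Length of the rightmost path. -/
def RMP : BTree → ℕ
  | nil => 0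
  | node _ r => RMP r + 1

end BTree

/-- Minimum value of a list (0 for the empty list). -/
def listMin : List ℤ → ℤ
  | [] => 0
  | a :: t => t.foldl min a

/-- Index (0-based) of the minimum of a list. -/
def minIdx (l : List ℤ) : ℕ := l.idxOf (listMin l)

/-- Cartesian tree of a list, with fuel for termination. -/
def ctreeAux : ℕ → List ℤ → BTree
  | 0, _ => .nil
  | _ + 1, [] => .nil
  | n + 1, a :: t =>
      let g := minIdx (a :: t)
      .node (ctreeAux n ((a :: t).take g)) (ctreeAux n ((a :: t).drop (g + 1)))

/-- Cartesian tree of a list: the root is the position of the minimum,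
its subtrees are the Cartesian trees of the prefix and suffix around it. -/
def ctreeL (l : List ℤ) : BTree := ctreeAux l.length l

/-- The factor x[a..b] (1-based positions) of a sequence, as a list. -/
def seqList (x : ℕ → ℤ) (a b : ℕ) : List ℤ :=
  (List.range (b + 1 - a)).map (fun k => x (a + k))

/-- Cartesian tree of the sequence x[1..m]. -/
def ctreeOf (m : ℕ) (x : ℕ → ℤ) : BTree := ctreeL (seqList x 1 m)

/-- Positions j < h (1-based) with x[j] < x[h]. -/
def PDset (x : ℕ → ℤ) (h : ℕ) : Finset ℕ :=
  (Finset.Ico 1 h).filter (fun j => x j < x h)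

/-- Parent-distance table: PD_x[h] = h - max{j < h : x[j] < x[h]}, 0 if no such j. -/
def PD (x : ℕ → ℤ) (h : ℕ) : ℕ :=
  if hs : (PDset x h).Nonempty then h - (PDset x h).max' hs else 0

/-- Positions h < j ≤ m with x[j] < x[h]. -/
def RPDset (m : ℕ) (x : ℕ → ℤ) (h : ℕ) : Finset ℕ :=
  (Finset.Ioc h m).filter (fun j => x j < x h)

/-- Reverse parent-distance table: RPD_x[h] = min{j > h : x[j] < x[h]} - h, 0 if no such j. -/
def RPD (m : ℕ) (x : ℕ → ℤ) (h : ℕ) : ℕ :=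
  if hs : (RPDset m x h).Nonempty then (RPDset m x h).min' hs - h else 0

/-- Referent of h: the smallest position j > h with x[j] < x[h], or -1 if none. -/
def refD (m : ℕ) (x : ℕ → ℤ) (h : ℕ) : ℤ :=
  if hs : (RPDset m x h).Nonempty then ((RPDset m x h).min' hs : ℤ) else -1

/-- Skipped-number table: SN_x[h] is the number of nodes on the rightmost path of the
left subtree of node h in C(x), i.e. the number of positions whose referent is h. -/
def SN (m : ℕ) (x : ℕ → ℤ) (h : ℕ) : ℕ :=
  ((Finset.Ico 1 h).filter (fun j => refD m x j = (h : ℤ))).card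

/-- The swap τ(x,i): exchange the entries at positions i and i+1. -/
def swapAt (x : ℕ → ℤ) (i : ℕ) : ℕ → ℤ :=
  fun j => if j = i then x (i + 1) else if j = i + 1 then x i else x j

/-- ng(T,i): the Cartesian trees obtained from a sequence realizing T by one swap
at position i (valid positions are 1 ≤ i ≤ m-1). -/
def ngi (m : ℕ) (T : BTree) (i : ℕ) : Set BTree :=
  { S | 1 ≤ i ∧ i + 1 ≤ m ∧ ∃ x : ℕ → ℤ, Set.InjOn x (Set.Icc 1 m) ∧
        ctreeOf m x = T ∧ S = ctreeOf m (swapAt x i) }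

/-- ng(T): the swap neighbourhood of T. -/
def ng (m : ℕ) (T : BTree) : Set BTree := ⋃ i, ngi m T i

/-- Number of permutations of {1,...,n} whose Cartesian tree is A. -/
noncomputable def permCount (n : ℕ) (A : BTree) : ℕ :=
  Set.ncard { σ : Equiv.Perm (Fin n) |
    ctreeL (List.ofFn (fun k : Fin n => ((σ k : ℕ) : ℤ) + 1)) = A }

/-- Product over all nodes t of A of the size of the subtree rooted at t. -/
def hookProd : BTree → ℕ
  | .nil => 1
  | .node l r => (BTree.node l r).size * hookProd l * hookProd r


/-! ### Auxiliary development -/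

section ListLemmas

theorem listMin_spec : ∀ {l : List ℤ}, l ≠ [] → listMin l ∈ l ∧ ∀ v ∈ l, listMin l ≤ v := by
  have key : ∀ (t : List ℤ) (a : ℤ), (t.foldl min a = a ∨ t.foldl min a ∈ t) ∧
      t.foldl min a ≤ a ∧ ∀ v ∈ t, t.foldl min a ≤ v := by
    intro t
    induction t with
    | nil => intro a; simp
    | cons b t ih =>
      intro a
      obtain ⟨h1, h2, h3⟩ := ih (min a b)
      constructor
      · rcases h1 with h | h
        · rcases le_total a b with hab | hab
          · left; rw [List.foldl_cons, h, min_eq_left hab]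
          · right
            rw [List.foldl_cons, h, min_eq_right hab]
            exact List.mem_cons_self
        · right; right; exact h
      · refine ⟨le_trans h2 (min_le_left _ _), ?_⟩
        intro v hv
        rcases List.mem_cons.1 hv with rfl | hv
        · exact le_trans h2 (min_le_right _ _)
        · exact h3 v hv
  intro l hl
  match l, hl with
  | a :: t, _ =>
    obtain ⟨h1, h2, h3⟩ := key t a
    constructor
    · rcases h1 with h | h
      · simp [listMin, h]
      · simp [listMin]; right; exact h
    · intro v hv
      rcases List.mem_cons.1 hv with rfl | hv
      · exact h2
      · exact h3 v hv

theorem listMin_eq {l : List ℤ} {v0 : ℤ} (h0 : v0 ∈ l) (hmin : ∀ v ∈ l, v0 ≤ v) :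
    listMin l = v0 := by
  have hne : l ≠ [] := by rintro rfl; simp at h0
  obtain ⟨h1, h2⟩ := listMin_spec hne
  exact le_antisymm (h2 v0 h0) (hmin _ h1)

theorem indexOf_eq_of {l : List ℤ} {v : ℤ} {k : ℕ} (hk : k < l.length)
    (h : l[k] = v) (hprev : ∀ j (hj : j < k), l[j]'(by omega) ≠ v) :
    l.idxOf v = k := by
  induction l generalizing k with
  | nil => simp at hk
  | cons a t ih =>
    cases k with
    | zero => simp at h; simp [h, List.idxOf_cons_self]
    | succ k =>
      have ha : a ≠ v := by
        have := hprev 0 (by omega); simpa using this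
      rw [List.idxOf_cons_ne _ ha]
      have := ih (k := k) (by simpa using hk) (by simpa using h)
        (fun j hj => by have := hprev (j+1) (by omega); simpa using this)
      simp [this]

theorem minIdx_lt_length {l : List ℤ} (hl : l ≠ []) : minIdx l < l.length := by
  rw [minIdx]
  exact List.idxOf_lt_length_iff.2 (listMin_spec hl).1

theorem ctreeAux_eq : ∀ (N : ℕ) (l : List ℤ), l.length ≤ N → ∀ n, l.length ≤ n → ctreeAux n l = ctreeL l := by
  intro N
  induction N using Nat.strong_induction_on with
  | _ N ih =>
    intro l hlN n hn
    match l, n with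
    | [], 0 => rfl
    | [], n+1 => rfl
    | a :: t, n+1 =>
      have hne : (a :: t) ≠ [] := by simp
      have hg := minIdx_lt_length hne
      rw [ctreeL, show (a :: t).length = t.length + 1 from rfl, ctreeAux, ctreeAux]
      have h1 : ((a :: t).take (minIdx (a :: t))).length < (a :: t).length := by
        rw [List.length_take]; omega
      have h2 : ((a :: t).drop (minIdx (a :: t) + 1)).length < (a :: t).length := by
        rw [List.length_drop]; omega
      have hN : 1 ≤ N := by simp at hlN; omega
      rw [ih (N-1) (by omega) _ (by simp at hlN h1 ⊢ <;> omega) n (by simp at hn h1 ⊢ <;> omega),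
          ih (N-1) (by omega) _ (by simp at hlN h1 ⊢ <;> omega) t.length (by simp at h1 ⊢ <;> omega),
          ih (N-1) (by omega) _ (by simp at hlN h2 ⊢ <;> omega) n (by simp at hn h2 ⊢ <;> omega),
          ih (N-1) (by omega) _ (by simp at hlN h2 ⊢ <;> omega) t.length (by simp at h2 ⊢ <;> omega)]

theorem ctreeL_split {l : List ℤ} (hl : l ≠ []) :
    ctreeL l = .node (ctreeL (l.take (minIdx l))) (ctreeL (l.drop (minIdx l + 1))) := by
  match l, hl with
  | a :: t, _ =>
    rw [ctreeL, show (a :: t).length = t.length + 1 from rfl, ctreeAux]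
    have hg := minIdx_lt_length (l := a :: t) (by simp)
    have h1 : ((a :: t).take (minIdx (a :: t))).length ≤ t.length := by
      rw [List.length_take]; simp at hg ⊢; omega
    have h2 : ((a :: t).drop (minIdx (a :: t) + 1)).length ≤ t.length := by
      rw [List.length_drop]; simp <;> omega
    rw [ctreeAux_eq _ _ le_rfl _ h1, ctreeAux_eq _ _ le_rfl _ h2]

end ListLemmas
section Ctr

open Finset in
/-- Canonical position of the minimum of `x` on `[a,b]`. -/
def argmin (x : ℕ → ℤ) (a b : ℕ) : ℕ :=
  if h : a ≤ b then
    ((Finset.Icc a b).filter (fun j => ∀ k ∈ Finset.Icc a b, x j ≤ x k)).min'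
      (by
        obtain ⟨j, hj, hmin⟩ := Finset.exists_min_image (Finset.Icc a b) x
          ⟨a, Finset.mem_Icc.2 ⟨le_rfl, h⟩⟩
        exact ⟨j, Finset.mem_filter.2 ⟨hj, hmin⟩⟩)
  else 0

theorem argmin_spec {x : ℕ → ℤ} {a b : ℕ} (h : a ≤ b) :
    argmin x a b ∈ Finset.Icc a b ∧ ∀ k ∈ Finset.Icc a b, x (argmin x a b) ≤ x k := by
  rw [argmin, dif_pos h]
  have := Finset.min'_mem ((Finset.Icc a b).filter (fun j => ∀ k ∈ Finset.Icc a b, x j ≤ x k))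
    (by
      obtain ⟨j, hj, hmin⟩ := Finset.exists_min_image (Finset.Icc a b) x
        ⟨a, Finset.mem_Icc.2 ⟨le_rfl, h⟩⟩
      exact ⟨j, Finset.mem_filter.2 ⟨hj, hmin⟩⟩)
  exact ⟨(Finset.mem_filter.1 this).1, (Finset.mem_filter.1 this).2⟩

theorem argmin_mem {x : ℕ → ℤ} {a b : ℕ} (h : a ≤ b) : a ≤ argmin x a b ∧ argmin x a b ≤ b := by
  have := (argmin_spec (x := x) h).1; rw [Finset.mem_Icc] at this; exact this

theorem argmin_le {x : ℕ → ℤ} {a b k : ℕ} (h : a ≤ b) (hk : a ≤ k) (hk' : k ≤ b) :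
    x (argmin x a b) ≤ x k :=
  (argmin_spec h).2 k (Finset.mem_Icc.2 ⟨hk, hk'⟩)

/-- Uniqueness: a strict minimizer is the argmin. -/
theorem argmin_eq {x : ℕ → ℤ} {a b g : ℕ} (hg : a ≤ g) (hg' : g ≤ b)
    (h : ∀ j, a ≤ j → j ≤ b → j ≠ g → x g < x j) : argmin x a b = g := by
  have hab : a ≤ b := le_trans hg hg'
  have h1 := argmin_le (x := x) hab hg hg'
  by_contra hne
  obtain ⟨hga, hgb⟩ := argmin_mem (x := x) hab
  exact absurd h1 (not_le.2 (h _ hga hgb hne))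

/-- Strict minimality under injectivity. -/
theorem argmin_lt {x : ℕ → ℤ} {a b j : ℕ} (hx : Set.InjOn x (Set.Icc a b)) (hab : a ≤ b)
    (hj : a ≤ j) (hj' : j ≤ b) (hne : j ≠ argmin x a b) : x (argmin x a b) < x j := by
  obtain ⟨hga, hgb⟩ := argmin_mem (x := x) hab
  refine lt_of_le_of_ne (argmin_le hab hj hj') (fun h => hne ?_)
  exact (hx ⟨hga, hgb⟩ ⟨hj, hj'⟩ h).symm

private theorem min'_congr_aux {s t : Finset ℕ} (h : s = t) (hs : s.Nonempty) (ht : t.Nonempty) :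
    s.min' hs = t.min' ht := by subst h; rfl

theorem argmin_congr {x x' : ℕ → ℤ} {a b : ℕ} (h : ∀ j, a ≤ j → j ≤ b → x j = x' j) :
    argmin x a b = argmin x' a b := by
  by_cases hab : a ≤ b
  · have hs : ((Finset.Icc a b).filter (fun j => ∀ k ∈ Finset.Icc a b, x j ≤ x k)) =
        ((Finset.Icc a b).filter (fun j => ∀ k ∈ Finset.Icc a b, x' j ≤ x' k)) := by
      apply Finset.filter_congr
      intro j hj
      rw [Finset.mem_Icc] at hj
      constructor
      · intro hh k hk
        rw [Finset.mem_Icc] at hk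
        rw [← h _ hj.1 hj.2, ← h _ hk.1 hk.2]; exact hh k (Finset.mem_Icc.2 hk)
      · intro hh k hk
        rw [Finset.mem_Icc] at hk
        rw [h _ hj.1 hj.2, h _ hk.1 hk.2]; exact hh k (Finset.mem_Icc.2 hk)
    rw [argmin, dif_pos hab, argmin, dif_pos hab]
    exact min'_congr_aux hs _ _
  · rw [argmin, dif_neg hab, argmin, dif_neg hab]

end Ctr
section CtrDef

/-- Cartesian tree of `x` on the interval `[a,b]` (intended for `1 ≤ a`). -/
def ctr (x : ℕ → ℤ) (a b : ℕ) : BTree :=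
  if h : a ≤ b then
    .node (if argmin x a b = a then .nil else ctr x a (argmin x a b - 1))
          (ctr x (argmin x a b + 1) b)
  else .nil
  termination_by b + 1 - a
  decreasing_by
  · have := argmin_mem (x := x) h
    omega
  · have := argmin_mem (x := x) h
    omega

theorem ctr_nil {x : ℕ → ℤ} {a b : ℕ} (h : b < a) : ctr x a b = .nil := by
  rw [ctr, dif_neg (by omega)]

theorem ctr_split {x : ℕ → ℤ} {a b : ℕ} (h1 : 1 ≤ a) (h : a ≤ b) :
    ctr x a b = .node (ctr x a (argmin x a b - 1)) (ctr x (argmin x a b + 1) b) := by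
  rw [ctr, dif_pos h]
  by_cases hg : argmin x a b = a
  · rw [if_pos hg, hg, ctr_nil (show a - 1 < a by omega)]
  · rw [if_neg hg]

theorem ctr_congr_aux {x x' : ℕ → ℤ} : ∀ (N : ℕ) {a b : ℕ}, b + 1 - a ≤ N → 1 ≤ a →
    (∀ j, a ≤ j → j ≤ b → x j = x' j) → ctr x a b = ctr x' a b := by
  intro N
  induction N using Nat.strong_induction_on with
  | _ N ih =>
    intro a b hN h1 h
    by_cases hab : a ≤ b
    · have hg : argmin x a b = argmin x' a b := argmin_congr h
      obtain ⟨hga, hgb⟩ := argmin_mem (x := x) hab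
      rw [ctr_split h1 hab, ctr_split h1 hab, ← hg]
      congr 1
      · exact ih (argmin x a b - 1 + 1 - a) (by omega) le_rfl h1
          (fun j hj hj' => h j hj (by omega))
      · exact ih (b + 1 - (argmin x a b + 1)) (by omega) le_rfl (by omega)
          (fun j hj hj' => h j (by omega) hj')
    · rw [ctr_nil (by omega), ctr_nil (by omega)]

theorem ctr_congr {x x' : ℕ → ℤ} {a b : ℕ} (h1 : 1 ≤ a)
    (h : ∀ j, a ≤ j → j ≤ b → x j = x' j) :
    ctr x a b = ctr x' a b := ctr_congr_aux (b + 1 - a) le_rfl h1 h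

theorem ctr_size_aux {x : ℕ → ℤ} : ∀ (N : ℕ) {a b : ℕ}, b + 1 - a ≤ N → 1 ≤ a →
    (ctr x a b).size = b + 1 - a := by
  intro N
  induction N using Nat.strong_induction_on with
  | _ N ih =>
    intro a b hN h1
    by_cases hab : a ≤ b
    · obtain ⟨hga, hgb⟩ := argmin_mem (x := x) hab
      rw [ctr_split h1 hab, BTree.size,
        ih (argmin x a b - 1 + 1 - a) (by omega) le_rfl h1,
        ih (b + 1 - (argmin x a b + 1)) (by omega) le_rfl (by omega)]
      omega
    · rw [ctr_nil (by omega), BTree.size]; omega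

theorem ctr_size {x : ℕ → ℤ} {a b : ℕ} (h1 : 1 ≤ a) : (ctr x a b).size = b + 1 - a :=
  ctr_size_aux (b + 1 - a) le_rfl h1

theorem size_pos_ne_nil {T : BTree} (h : 0 < T.size) : T ≠ BTree.nil := by
  cases T with
  | nil => simp [BTree.size] at h
  | node l r => simp

theorem ctr_ne_nil {x : ℕ → ℤ} {a b : ℕ} (h1 : 1 ≤ a) (hab : a ≤ b) : ctr x a b ≠ .nil :=
  size_pos_ne_nil (by rw [ctr_size h1]; omega)

end CtrDef
section Corr

theorem seqList_length {x : ℕ → ℤ} {a b : ℕ} : (seqList x a b).length = b + 1 - a := by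
  simp [seqList]

theorem seqList_getElem {x : ℕ → ℤ} {a b k : ℕ} (hk : k < b + 1 - a) :
    (seqList x a b)[k]'(by rw [seqList_length]; omega) = x (a + k) := by
  simp [seqList]

theorem seqList_take {x : ℕ → ℤ} {a b g : ℕ} (h1 : 1 ≤ a) (hg : a ≤ g) (hgb : g ≤ b) :
    (seqList x a b).take (g - a) = seqList x a (g - 1) := by
  apply List.ext_getElem
  · rw [List.length_take, seqList_length, seqList_length]; omega
  · intro k hk1 hk2
    rw [seqList_length] at hk2
    rw [List.getElem_take]
    rw [seqList_getElem (by omega), seqList_getElem (by omega)]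

theorem seqList_drop {x : ℕ → ℤ} {a b g : ℕ} (hg : a ≤ g) :
    (seqList x a b).drop (g - a + 1) = seqList x (g + 1) b := by
  apply List.ext_getElem
  · rw [List.length_drop, seqList_length, seqList_length]; omega
  · intro k hk1 hk2
    rw [seqList_length] at hk2
    rw [List.getElem_drop]
    rw [seqList_getElem (by omega), seqList_getElem (by omega)]
    congr 1; omega

theorem seqList_minIdx {x : ℕ → ℤ} {a b : ℕ} (h1 : 1 ≤ a) (hab : a ≤ b)
    (hx : Set.InjOn x (Set.Icc a b)) :
    minIdx (seqList x a b) = argmin x a b - a := by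
  obtain ⟨hga, hgb⟩ := argmin_mem (x := x) hab
  have hmin : listMin (seqList x a b) = x (argmin x a b) := by
    apply listMin_eq
    · rw [List.mem_iff_getElem]
      exact ⟨argmin x a b - a, by rw [seqList_length]; omega,
        by rw [seqList_getElem (by omega)]; congr 1; omega⟩
    · intro v hv
      rw [List.mem_iff_getElem] at hv
      obtain ⟨k, hk, rfl⟩ := hv
      rw [seqList_length] at hk
      rw [seqList_getElem (by omega)]
      exact argmin_le hab (by omega) (by omega)
  rw [minIdx, hmin]
  apply indexOf_eq_of (by rw [seqList_length]; omega)
  · rw [seqList_getElem (by omega)]; congr 1; omega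
  · intro j hj
    rw [seqList_getElem (by omega)]
    intro heq
    have hne : a + j ≠ argmin x a b := by omega
    exact absurd heq (ne_of_gt (argmin_lt hx hab (by omega) (by omega) hne))

theorem ctr_eq_aux {x : ℕ → ℤ} : ∀ (N : ℕ) {a b : ℕ}, b + 1 - a ≤ N → 1 ≤ a →
    Set.InjOn x (Set.Icc a b) → ctreeL (seqList x a b) = ctr x a b := by
  intro N
  induction N using Nat.strong_induction_on with
  | _ N ih =>
    intro a b hN h1 hx
    by_cases hab : a ≤ b
    · obtain ⟨hga, hgb⟩ := argmin_mem (x := x) hab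
      have hne : seqList x a b ≠ [] := by
        intro h; have := seqList_length (x := x) (a := a) (b := b); rw [h] at this
        simp at this; omega
      rw [ctreeL_split hne, seqList_minIdx h1 hab hx, seqList_take h1 hga hgb,
        seqList_drop hga, ctr_split h1 hab]
      congr 1
      · exact ih (argmin x a b - 1 + 1 - a) (by omega) le_rfl h1
          (hx.mono (Set.Icc_subset_Icc le_rfl (by omega)))
      · exact ih (b + 1 - (argmin x a b + 1)) (by omega) le_rfl (by omega)
          (hx.mono (Set.Icc_subset_Icc (by omega) le_rfl))
    · have : seqList x a b = [] := by
        rw [← List.length_eq_zero_iff, seqList_length]; omega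
      rw [this, ctr_nil (by omega)]; rfl

theorem ctr_eq {x : ℕ → ℤ} {a b : ℕ} (h1 : 1 ≤ a) (hx : Set.InjOn x (Set.Icc a b)) :
    ctreeL (seqList x a b) = ctr x a b := ctr_eq_aux (b + 1 - a) le_rfl h1 hx

theorem ctreeOf_eq_ctr {x : ℕ → ℤ} {m : ℕ} (hx : Set.InjOn x (Set.Icc 1 m)) :
    ctreeOf m x = ctr x 1 m := ctr_eq le_rfl hx

end Corr
section Ops

/-- Insert a new node at depth `k` on the left spine. -/
def lIns : BTree → ℕ → BTree
  | t, 0 => .node .nil t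
  | .nil, _ + 1 => .node .nil .nil
  | .node l r, k + 1 => .node (lIns l k) r

/-- Insert a new node at depth `k` on the right spine. -/
def rIns : BTree → ℕ → BTree
  | t, 0 => .node t .nil
  | .nil, _ + 1 => .node .nil .nil
  | .node l r, k + 1 => .node l (rIns r k)

/-- Delete the leftmost node. -/
def delL : BTree → BTree
  | .nil => .nil
  | .node .nil r => r
  | .node (.node l' r') r => .node (delL (.node l' r')) r

/-- Delete the rightmost node. -/
def delR : BTree → BTree
  | .nil => .nil
  | .node l .nil => l
  | .node l (.node l' r') => .node l (delR (.node l' r'))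

theorem delL_node {L R : BTree} (h : L ≠ .nil) : delL (.node L R) = .node (delL L) R := by
  cases L with
  | nil => exact absurd rfl h
  | node l r => rfl

theorem delR_node {L R : BTree} (h : R ≠ .nil) : delR (.node L R) = .node L (delR R) := by
  cases R with
  | nil => exact absurd rfl h
  | node l r => rfl

theorem argmin_shrink_left {x : ℕ → ℤ} {a b : ℕ} (hab : a ≤ b)
    (hx : Set.InjOn x (Set.Icc a b)) (hg : a < argmin x a b) :
    argmin x (a + 1) b = argmin x a b := by
  obtain ⟨hga, hgb⟩ := argmin_mem (x := x) hab
  apply argmin_eq (by omega) hgb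
  intro j hj hj' hne
  exact argmin_lt hx hab (by omega) hj' hne

theorem argmin_shrink_right {x : ℕ → ℤ} {a b : ℕ} (hab : a ≤ b)
    (hx : Set.InjOn x (Set.Icc a b)) (hg : argmin x a b < b) :
    argmin x a (b - 1) = argmin x a b := by
  obtain ⟨hga, hgb⟩ := argmin_mem (x := x) hab
  apply argmin_eq hga (by omega)
  intro j hj hj' hne
  exact argmin_lt hx hab hj (by omega) hne

theorem ctr_delL_aux {x : ℕ → ℤ} : ∀ (N : ℕ) {a b : ℕ}, b + 1 - a ≤ N → 1 ≤ a → a ≤ b →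
    Set.InjOn x (Set.Icc a b) → delL (ctr x a b) = ctr x (a + 1) b := by
  intro N
  induction N using Nat.strong_induction_on with
  | _ N ih =>
    intro a b hN h1 hab hx
    obtain ⟨hga, hgb⟩ := argmin_mem (x := x) hab
    rw [ctr_split h1 hab]
    by_cases hg : argmin x a b = a
    · rw [hg, ctr_nil (show a - 1 < a by omega)]
      rw [show delL (BTree.node BTree.nil (ctr x (a+1) b)) = ctr x (a+1) b from rfl]
    · have hA := ctr_ne_nil (x := x) h1 (show a ≤ argmin x a b - 1 by omega)
      rw [delL_node hA,
        ih (argmin x a b - 1 + 1 - a) (by omega) le_rfl h1 (by omega)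
          (hx.mono (Set.Icc_subset_Icc le_rfl (by omega))),
        ctr_split (by omega) (show a + 1 ≤ b by omega),
        argmin_shrink_left hab hx (by omega)]

theorem ctr_delR_aux {x : ℕ → ℤ} : ∀ (N : ℕ) {a b : ℕ}, b + 1 - a ≤ N → 1 ≤ a → a ≤ b →
    Set.InjOn x (Set.Icc a b) → delR (ctr x a b) = ctr x a (b - 1) := by
  intro N
  induction N using Nat.strong_induction_on with
  | _ N ih =>
    intro a b hN h1 hab hx
    obtain ⟨hga, hgb⟩ := argmin_mem (x := x) hab
    rw [ctr_split h1 hab]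
    by_cases hg : argmin x a b = b
    · rw [hg, ctr_nil (show b < b + 1 by omega)]
      rw [show delR (BTree.node (ctr x a (b-1)) BTree.nil) = ctr x a (b-1) from rfl]
    · have hB := ctr_ne_nil (x := x) (show 1 ≤ argmin x a b + 1 by omega)
        (show argmin x a b + 1 ≤ b by omega)
      rw [delR_node hB,
        ih (b + 1 - (argmin x a b + 1)) (by omega) le_rfl (by omega) (by omega)
          (hx.mono (Set.Icc_subset_Icc (by omega) le_rfl)),
        ctr_split h1 (show a ≤ b - 1 by omega),
        argmin_shrink_right hab hx (by omega)]

theorem ctr_delL {x : ℕ → ℤ} {a b : ℕ} (h1 : 1 ≤ a) (hab : a ≤ b)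
    (hx : Set.InjOn x (Set.Icc a b)) : delL (ctr x a b) = ctr x (a + 1) b :=
  ctr_delL_aux (b + 1 - a) le_rfl h1 hab hx

theorem ctr_delR {x : ℕ → ℤ} {a b : ℕ} (h1 : 1 ≤ a) (hab : a ≤ b)
    (hx : Set.InjOn x (Set.Icc a b)) : delR (ctr x a b) = ctr x a (b - 1) :=
  ctr_delR_aux (b + 1 - a) le_rfl h1 hab hx

end Ops
section Ins

theorem lIns_zero (t : BTree) : lIns t 0 = .node .nil t := by cases t <;> rfl
theorem rIns_zero (t : BTree) : rIns t 0 = .node t .nil := by cases t <;> rfl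
theorem lIns_succ (l r : BTree) (k : ℕ) : lIns (.node l r) (k+1) = .node (lIns l k) r := rfl
theorem rIns_succ (l r : BTree) (k : ℕ) : rIns (.node l r) (k+1) = .node l (rIns r k) := rfl

theorem ctr_lIns_aux {x : ℕ → ℤ} : ∀ (N : ℕ) {a b : ℕ}, b + 1 - a ≤ N → 1 ≤ a → a ≤ b →
    Set.InjOn x (Set.Icc a b) →
    ∃ k ≤ (ctr x (a + 1) b).LMP, ctr x a b = lIns (ctr x (a + 1) b) k := by
  intro N
  induction N using Nat.strong_induction_on with
  | _ N ih =>
    intro a b hN h1 hab hx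
    obtain ⟨hga, hgb⟩ := argmin_mem (x := x) hab
    by_cases hg : argmin x a b = a
    · refine ⟨0, Nat.zero_le _, ?_⟩
      rw [ctr_split h1 hab, hg, ctr_nil (show a - 1 < a by omega), lIns_zero]
    · have hg2 := argmin_shrink_left hab hx (by omega)
      obtain ⟨k, hk, hrec⟩ := ih (argmin x a b - 1 + 1 - a) (by omega) le_rfl h1 (by omega)
        (hx.mono (Set.Icc_subset_Icc le_rfl (by omega)))
      refine ⟨k + 1, ?_, ?_⟩
      · rw [ctr_split (by omega) (show a + 1 ≤ b by omega), hg2, BTree.LMP]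
        omega
      · rw [ctr_split h1 hab, ctr_split (by omega) (show a + 1 ≤ b by omega), hg2, hrec,
          lIns_succ]

theorem ctr_rIns_aux {x : ℕ → ℤ} : ∀ (N : ℕ) {a b : ℕ}, b + 1 - a ≤ N → 1 ≤ a → a ≤ b →
    Set.InjOn x (Set.Icc a b) →
    ∃ k ≤ (ctr x a (b - 1)).RMP, ctr x a b = rIns (ctr x a (b - 1)) k := by
  intro N
  induction N using Nat.strong_induction_on with
  | _ N ih =>
    intro a b hN h1 hab hx
    obtain ⟨hga, hgb⟩ := argmin_mem (x := x) hab
    by_cases hg : argmin x a b = b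
    · refine ⟨0, Nat.zero_le _, ?_⟩
      rw [ctr_split h1 hab, hg, ctr_nil (show b < b + 1 by omega), rIns_zero]
    · have hg2 := argmin_shrink_right hab hx (by omega)
      obtain ⟨k, hk, hrec⟩ := ih (b + 1 - (argmin x a b + 1)) (by omega) le_rfl
        (show 1 ≤ argmin x a b + 1 by omega) (show argmin x a b + 1 ≤ b by omega)
        (hx.mono (Set.Icc_subset_Icc (by omega) le_rfl))
      refine ⟨k + 1, ?_, ?_⟩
      · rw [ctr_split h1 (show a ≤ b - 1 by omega), hg2, BTree.RMP]
        omega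
      · rw [ctr_split h1 hab, ctr_split h1 (show a ≤ b - 1 by omega), hg2, hrec,
          rIns_succ]

theorem ctr_lIns {x : ℕ → ℤ} {a b : ℕ} (h1 : 1 ≤ a) (hab : a ≤ b)
    (hx : Set.InjOn x (Set.Icc a b)) :
    ∃ k ≤ (ctr x (a + 1) b).LMP, ctr x a b = lIns (ctr x (a + 1) b) k :=
  ctr_lIns_aux (b + 1 - a) le_rfl h1 hab hx

theorem ctr_rIns {x : ℕ → ℤ} {a b : ℕ} (h1 : 1 ≤ a) (hab : a ≤ b)
    (hx : Set.InjOn x (Set.Icc a b)) :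
    ∃ k ≤ (ctr x a (b - 1)).RMP, ctr x a b = rIns (ctr x a (b - 1)) k :=
  ctr_rIns_aux (b + 1 - a) le_rfl h1 hab hx

end Ins
section Swap

/-- The transposition of positions `i`, `i+1`. -/
def swp (i j : ℕ) : ℕ := if j = i then i + 1 else if j = i + 1 then i else j

theorem swapAt_apply (x : ℕ → ℤ) (i j : ℕ) : swapAt x i j = x (swp i j) := by
  simp only [swapAt, swp]
  split_ifs <;> rfl

theorem swp_invol (i j : ℕ) : swp i (swp i j) = j := by
  simp only [swp]; split_ifs <;> omega

theorem swp_mem {i j a b : ℕ} (hai : a ≤ i) (hib : i + 1 ≤ b) (hj : a ≤ j) (hj' : j ≤ b) :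
    a ≤ swp i j ∧ swp i j ≤ b := by
  simp only [swp]; split_ifs <;> omega

theorem swp_fix {i j : ℕ} (h1 : j ≠ i) (h2 : j ≠ i + 1) : swp i j = j := by
  simp only [swp]; split_ifs <;> omega

theorem swapAt_fix {x : ℕ → ℤ} {i j : ℕ} (h1 : j ≠ i) (h2 : j ≠ i + 1) :
    swapAt x i j = x j := by rw [swapAt_apply, swp_fix h1 h2]

theorem swapAt_injOn {x : ℕ → ℤ} {i a b : ℕ} (hx : Set.InjOn x (Set.Icc a b))
    (hai : a ≤ i) (hib : i + 1 ≤ b) : Set.InjOn (swapAt x i) (Set.Icc a b) := by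
  intro j hj j' hj' heq
  rw [swapAt_apply, swapAt_apply] at heq
  have h1 := swp_mem hai hib hj.1 hj.2
  have h2 := swp_mem hai hib hj'.1 hj'.2
  have := hx ⟨h1.1, h1.2⟩ ⟨h2.1, h2.2⟩ heq
  have := congrArg (swp i) this
  rwa [swp_invol, swp_invol] at this

theorem argmin_swapAt {x : ℕ → ℤ} {i a b : ℕ} (hx : Set.InjOn x (Set.Icc a b))
    (hab : a ≤ b) (hai : a ≤ i) (hib : i + 1 ≤ b) :
    argmin (swapAt x i) a b = swp i (argmin x a b) := by
  obtain ⟨hga, hgb⟩ := argmin_mem (x := x) hab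
  have hmem := swp_mem hai hib hga hgb
  apply argmin_eq hmem.1 hmem.2
  intro j hj hj' hne
  rw [swapAt_apply, swapAt_apply, swp_invol]
  apply argmin_lt hx hab (swp_mem hai hib hj hj').1 (swp_mem hai hib hj hj').2
  intro h
  exact hne (by rw [← swp_invol i j, h])

theorem swapAt_injOn_left {x : ℕ → ℤ} {i a b : ℕ} (hx : Set.InjOn x (Set.Icc a b))
    (hai : a ≤ i) (hib : i + 1 ≤ b) : Set.InjOn (swapAt x i) (Set.Icc a i) := by
  intro j hj j' hj' heq
  have key : ∀ j : ℕ, a ≤ j → j ≤ i → swapAt x i j = x (if j = i then i + 1 else j) := by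
    intro j h1 h2
    by_cases hji : j = i
    · rw [if_pos hji, hji]; simp [swapAt]
    · rw [if_neg hji, swapAt_fix hji (by omega)]
  rw [key j hj.1 hj.2, key j' hj'.1 hj'.2] at heq
  have hm : ∀ j : ℕ, a ≤ j → j ≤ i → (if j = i then i + 1 else j) ∈ Set.Icc a b := by
    intro j h1 h2; split_ifs <;> constructor <;> omega
  have := hx (hm j hj.1 hj.2) (hm j' hj'.1 hj'.2) heq
  have hj2 := hj.2
  have hj'2 := hj'.2
  split_ifs at this <;> omega

theorem swapAt_injOn_right {x : ℕ → ℤ} {i a b : ℕ} (hx : Set.InjOn x (Set.Icc a b))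
    (hai : a ≤ i) (hib : i + 1 ≤ b) : Set.InjOn (swapAt x i) (Set.Icc (i + 1) b) := by
  intro j hj j' hj' heq
  have key : ∀ j : ℕ, i + 1 ≤ j → j ≤ b → swapAt x i j = x (if j = i + 1 then i else j) := by
    intro j h1 h2
    by_cases hji : j = i + 1
    · rw [if_pos hji, hji]; simp [swapAt]
    · rw [if_neg hji, swapAt_fix (by omega) hji]
  rw [key j hj.1 hj.2, key j' hj'.1 hj'.2] at heq
  have hm : ∀ j : ℕ, i + 1 ≤ j → j ≤ b → (if j = i + 1 then i else j) ∈ Set.Icc a b := by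
    intro j h1 h2; split_ifs <;> constructor <;> omega
  have := hx (hm j hj.1 hj.2) (hm j' hj'.1 hj'.2) heq
  have hj1 := hj.1
  have hj'1 := hj'.1
  split_ifs at this <;> omega

end Swap
section Nbrs

/-- The possible Cartesian-tree shapes after one swap at (0-based) in-order position `j`. -/
def nbrs : BTree → ℕ → Finset BTree
  | .nil, _ => ∅
  | .node L R, j =>
    if j + 1 < L.size then (nbrs L j).image (fun A => .node A R)
    else if j + 1 = L.size then
      (Finset.range (R.LMP + 1)).image (fun k => .node (delR L) (lIns R k))
    else if j = L.size then
      (Finset.range (L.RMP + 1)).image (fun k => .node (rIns L k) (delL R))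
    else (nbrs R (j - L.size - 1)).image (fun B => .node L B)

theorem ctr_swap_mem_aux : ∀ (N : ℕ) {x : ℕ → ℤ} {a b i : ℕ}, b + 1 - a ≤ N → 1 ≤ a →
    a ≤ i → i + 1 ≤ b → Set.InjOn x (Set.Icc a b) →
    ctr (swapAt x i) a b ∈ nbrs (ctr x a b) (i - a) := by
  intro N
  induction N using Nat.strong_induction_on with
  | _ N ih =>
    intro x a b i hN h1 hai hib hx
    have hab : a ≤ b := by omega
    obtain ⟨hga, hgb⟩ := argmin_mem (x := x) hab
    set g := argmin x a b with hgdef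
    have hy : Set.InjOn (swapAt x i) (Set.Icc a b) := swapAt_injOn hx hai hib
    have hgy : argmin (swapAt x i) a b = swp i g := argmin_swapAt hx hab hai hib
    have hsizeL : (ctr x a (g - 1)).size = g - a := by rw [ctr_size h1]; omega
    rw [ctr_split h1 hab, ctr_split h1 hab (x := swapAt x i), hgy, nbrs]
    rcases Nat.lt_trichotomy (i + 1) g with hcase | hcase | hcase
    · -- swap strictly inside the left part
      have hswp : swp i g = g := swp_fix (by omega) (by omega)
      rw [hswp, if_pos (by omega : i - a + 1 < (ctr x a (g-1)).size)]
      have hR : ctr (swapAt x i) (g + 1) b = ctr x (g + 1) b :=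
        ctr_congr (by omega) (fun j hj hj' => swapAt_fix (by omega) (by omega))
      rw [hR]
      apply Finset.mem_image_of_mem
      exact ih (g - 1 + 1 - a) (by omega) le_rfl h1 hai (by omega)
        (hx.mono (Set.Icc_subset_Icc le_rfl (by omega)))
    · -- i + 1 = g : swap of the root with its in-order predecessor
      have hswp : swp i g = i := by rw [← hcase]; simp [swp]
      rw [hswp, if_neg (by omega : ¬ (i - a + 1 < (ctr x a (g-1)).size)),
        if_pos (by omega : i - a + 1 = (ctr x a (g-1)).size)]
      have hL : ctr (swapAt x i) a (i - 1) = delR (ctr x a (g - 1)) := by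
        rw [ctr_congr h1 (fun j hj hj' => swapAt_fix (by omega) (by omega)),
          ctr_delR h1 (by omega) (hx.mono (Set.Icc_subset_Icc le_rfl (by omega)))]
        congr 1
        omega
      obtain ⟨k, hk, hrec⟩ := ctr_lIns (a := i + 1) (b := b) (by omega) (by omega)
        (swapAt_injOn_right hx hai hib)
      have hR : ctr (swapAt x i) (i + 1 + 1) b = ctr x (g + 1) b := by
        rw [ctr_congr (by omega) (fun j hj hj' => swapAt_fix (by omega) (by omega))]
        congr 1
        omega
      rw [show i - 1 = i - 1 from rfl] at hL
      rw [hL]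
      rw [hR] at hrec
      rw [hrec]
      apply Finset.mem_image_of_mem
      rw [hR] at hk
      refine Finset.mem_range.2 ?_
      rw [← hgdef]
      omega
    · -- i = g or swap inside right part
      rcases Nat.lt_trichotomy i g with hcase2 | hcase2 | hcase2
      · omega
      · -- i = g : swap of the root with its in-order successor
        have hswp : swp i g = i + 1 := by rw [← hcase2]; simp [swp]
        rw [hswp, if_neg (by omega : ¬ (i - a + 1 < (ctr x a (g-1)).size)),
          if_neg (by omega : ¬ (i - a + 1 = (ctr x a (g-1)).size)),
          if_pos (by rw [hsizeL]; omega : i - a = (ctr x a (g-1)).size)]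
        have hR : ctr (swapAt x i) (i + 1 + 1) b = delL (ctr x (g + 1) b) := by
          rw [ctr_congr (by omega) (fun j hj hj' => swapAt_fix (by omega) (by omega)),
            ctr_delL (by omega) (by omega)
              (hx.mono (Set.Icc_subset_Icc (by omega) le_rfl))]
          congr 1
          omega
        obtain ⟨k, hk, hrec⟩ := ctr_rIns (a := a) (b := i) h1 hai
          (swapAt_injOn_left hx hai hib)
        have hL : ctr (swapAt x i) a (i - 1) = ctr x a (g - 1) := by
          rw [ctr_congr h1 (fun j hj hj' => swapAt_fix (by omega) (by omega))]
          congr 1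
          omega
        rw [show i + 1 - 1 = i from rfl]
        rw [hL] at hrec
        rw [hrec, hR]
        apply Finset.mem_image_of_mem
        rw [hL] at hk
        refine Finset.mem_range.2 ?_
        rw [← hgdef]
        omega
      · -- swap strictly inside the right part
        have hswp : swp i g = g := swp_fix (by omega) (by omega)
        rw [hswp, if_neg (by omega : ¬ (i - a + 1 < (ctr x a (g-1)).size)),
          if_neg (by rw [hsizeL]; omega : ¬ (i - a + 1 = (ctr x a (g-1)).size)),
          if_neg (by rw [hsizeL]; omega : ¬ (i - a = (ctr x a (g-1)).size))]
        have hL : ctr (swapAt x i) a (g - 1) = ctr x a (g - 1) :=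
          ctr_congr h1 (fun j hj hj' => swapAt_fix (by omega) (by omega))
        rw [hL]
        apply Finset.mem_image_of_mem
        have := ih (b + 1 - (g + 1)) (by omega) le_rfl (by omega) (by omega) hib
          (hx.mono (Set.Icc_subset_Icc (by omega) le_rfl))
        rw [hsizeL, show i - a - (g - a) - 1 = i - (g + 1) from by omega]
        exact this

theorem ctr_swap_mem {x : ℕ → ℤ} {a b i : ℕ} (h1 : 1 ≤ a) (hai : a ≤ i) (hib : i + 1 ≤ b)
    (hx : Set.InjOn x (Set.Icc a b)) :
    ctr (swapAt x i) a b ∈ nbrs (ctr x a b) (i - a) :=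
  ctr_swap_mem_aux (b + 1 - a) le_rfl h1 hai hib hx

end Nbrs
section Bits

def isNode : BTree → Bool
  | .nil => false
  | .node _ _ => true

/-- Whether the node at 0-based in-order position `k` has a nonempty right subtree. -/
def hasR : BTree → ℕ → Bool
  | .nil, _ => false
  | .node L R, k =>
    if k < L.size then hasR L k
    else if k = L.size then isNode R
    else hasR R (k - L.size - 1)

theorem size_node_pos (l r : BTree) : 0 < (BTree.node l r).size := Nat.succ_pos _

theorem hasR_last : ∀ T : BTree, T ≠ .nil → hasR T (T.size - 1) = false := by
  intro T
  induction T with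
  | nil => intro h; exact absurd rfl h
  | node L R ihL ihR =>
    intro _
    by_cases hR : R = BTree.nil
    · subst hR
      have hs : (BTree.node L BTree.nil).size - 1 = L.size := by simp [BTree.size]
      rw [hs, hasR, if_neg (by omega), if_pos rfl]
      rfl
    · have hRpos : 0 < R.size := by
        cases R with
        | nil => exact absurd rfl hR
        | node l' r' => exact size_node_pos l' r'
      have hsz : (BTree.node L R).size = L.size + R.size + 1 := rfl
      rw [hasR, if_neg (by omega), if_neg (by omega),
        show (BTree.node L R).size - 1 - L.size - 1 = R.size - 1 from by omega]
      exact ihR hR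

theorem isNode_true {T : BTree} (h : T ≠ .nil) : isNode T = true := by
  cases T with
  | nil => exact absurd rfl h
  | node l r => rfl

theorem hasR_ctr_aux : ∀ (N : ℕ) {x : ℕ → ℤ} {a b k : ℕ}, b + 1 - a ≤ N → 1 ≤ a →
    Set.InjOn x (Set.Icc a b) → a + k + 1 ≤ b →
    hasR (ctr x a b) k = decide (x (a + k) < x (a + k + 1)) := by
  intro N
  induction N using Nat.strong_induction_on with
  | _ N ih =>
    intro x a b k hN h1 hx hk
    have hab : a ≤ b := by omega
    obtain ⟨hga, hgb⟩ := argmin_mem (x := x) hab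
    set g := argmin x a b with hgdef
    have hsizeL : (ctr x a (g - 1)).size = g - a := by rw [ctr_size h1]; omega
    rw [ctr_split h1 hab, ← hgdef, hasR]
    rcases Nat.lt_trichotomy (a + k + 1) g with hcase | hcase | hcase
    · rw [if_pos (by omega : k < (ctr x a (g-1)).size)]
      exact ih (g - 1 + 1 - a) (by omega) le_rfl h1
        (hx.mono (Set.Icc_subset_Icc le_rfl (by omega))) (by omega)
    · rw [if_pos (by omega : k < (ctr x a (g-1)).size)]
      have hL : ctr x a (g - 1) ≠ .nil := ctr_ne_nil h1 (by omega)
      have hlast := hasR_last _ hL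
      rw [hsizeL] at hlast
      rw [show k = g - a - 1 from by omega, hlast,
        show a + (g - a - 1) = g - 1 from by omega,
        show g - 1 + 1 = g from by omega]
      symm
      simp only [decide_eq_false_iff_not, not_lt]
      exact le_of_lt (argmin_lt hx hab (by omega) (by omega) (by omega))
    · rcases Nat.lt_trichotomy (a + k) g with hcase2 | hcase2 | hcase2
      · omega
      · rw [if_neg (by omega : ¬ (k < (ctr x a (g-1)).size)),
          if_pos (by omega : k = (ctr x a (g-1)).size)]
        have hR : ctr x (g + 1) b ≠ .nil := ctr_ne_nil (by omega) (by omega)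
        rw [isNode_true hR]
        rw [show a + k = g from by omega]
        symm
        simp only [decide_eq_true_eq]
        exact argmin_lt hx hab (by omega) (by omega) (by omega)
      · rw [if_neg (by omega : ¬ (k < (ctr x a (g-1)).size)),
          if_neg (by omega : ¬ (k = (ctr x a (g-1)).size))]
        have := ih (b + 1 - (g + 1)) (by omega) le_rfl (by omega)
          (hx.mono (Set.Icc_subset_Icc (by omega) le_rfl))
          (show (g + 1) + (k - (ctr x a (g-1)).size - 1) + 1 ≤ b from by rw [hsizeL]; omega)
        rw [this]
        have e1 : g + 1 + (k - (ctr x a (g - 1)).size - 1) = a + k := by rw [hsizeL]; omega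
        rw [e1]

theorem hasR_ctr {x : ℕ → ℤ} {a b k : ℕ} (h1 : 1 ≤ a) (hx : Set.InjOn x (Set.Icc a b))
    (hk : a + k + 1 ≤ b) :
    hasR (ctr x a b) k = decide (x (a + k) < x (a + k + 1)) :=
  hasR_ctr_aux (b + 1 - a) le_rfl h1 hx hk

end Bits
section Distinct

theorem swap_trees_ne {x : ℕ → ℤ} {m i j : ℕ} (hx : Set.InjOn x (Set.Icc 1 m))
    (h1 : 1 ≤ i) (hij : i < j) (hjm : j + 1 ≤ m) :
    ctr (swapAt x i) 1 m ≠ ctr (swapAt x j) 1 m := by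
  intro heq
  have hxne : ∀ p q : ℕ, 1 ≤ p → p ≤ m → 1 ≤ q → q ≤ m → p ≠ q → x p ≠ x q := by
    intro p q hp hp' hq hq' hne h
    exact hne (hx ⟨hp, hp'⟩ ⟨hq, hq'⟩ h)
  have hyinj : Set.InjOn (swapAt x i) (Set.Icc 1 m) := swapAt_injOn hx h1 (by omega)
  have hzinj : Set.InjOn (swapAt x j) (Set.Icc 1 m) := swapAt_injOn hx (by omega) hjm
  have yi : swapAt x i i = x (i + 1) := by simp [swapAt]
  have yi1 : swapAt x i (i + 1) = x i := by simp [swapAt]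
  have hbY := hasR_ctr (a := 1) (b := m) (k := i - 1) le_rfl hyinj (by omega)
  have hbZ := hasR_ctr (a := 1) (b := m) (k := i - 1) le_rfl hzinj (by omega)
  rw [show (1 : ℕ) + (i - 1) = i from by omega] at hbY hbZ
  rw [yi, yi1] at hbY
  have hEq1 : decide (x (i + 1) < x i) = hasR (ctr (swapAt x j) 1 m) (i - 1) := by
    rw [← hbY, heq]
  by_cases hj2 : j = i + 1
  · subst hj2
    -- neighbouring swaps: use two bits
    have zi : swapAt x (i + 1) i = x i := swapAt_fix (by omega) (by omega)
    have zi1 : swapAt x (i + 1) (i + 1) = x (i + 2) := by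
      rw [swapAt_apply, show swp (i + 1) (i + 1) = i + 2 from by simp [swp]]
    have zi2 : swapAt x (i + 1) (i + 2) = x (i + 1) := by
      rw [swapAt_apply, show swp (i + 1) (i + 2) = i + 1 from by simp [swp]]
    rw [hbZ, zi, zi1] at hEq1
    have hbY2 := hasR_ctr (a := 1) (b := m) (k := i) le_rfl hyinj (by omega)
    have hbZ2 := hasR_ctr (a := 1) (b := m) (k := i) le_rfl hzinj (by omega)
    rw [show (1 : ℕ) + i = i + 1 from by omega] at hbY2 hbZ2
    have yi2 : swapAt x i (i + 2) = x (i + 2) := swapAt_fix (by omega) (by omega)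
    rw [yi1, yi2] at hbY2
    rw [zi1, zi2] at hbZ2
    have hEq2 : decide (x i < x (i + 2)) = decide (x (i + 2) < x (i + 1)) := by
      rw [← hbY2, heq, hbZ2]
    rw [decide_eq_decide] at hEq1 hEq2
    have hne1 : x i ≠ x (i + 1) := hxne _ _ (by omega) (by omega) (by omega) (by omega) (by omega)
    have hne2 : x i ≠ x (i + 2) := hxne _ _ (by omega) (by omega) (by omega) (by omega) (by omega)
    have hne3 : x (i + 1) ≠ x (i + 2) :=
      hxne _ _ (by omega) (by omega) (by omega) (by omega) (by omega)
    by_cases hc : x i < x (i + 2)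
    · have h4 := hEq1.2 hc
      have h5 := hEq2.1 hc
      linarith
    · have h4 : x (i + 2) < x i := lt_of_le_of_ne (not_lt.1 hc) (Ne.symm hne2)
      have h5 : ¬ x (i + 1) < x i := fun h => hc (hEq1.1 h)
      have h6 : x i < x (i + 1) := lt_of_le_of_ne (not_lt.1 h5) hne1
      have h7 : ¬ x (i + 2) < x (i + 1) := fun h => hc (hEq2.2 h)
      have h8 : x (i + 1) < x (i + 2) := lt_of_le_of_ne (not_lt.1 h7) hne3
      linarith
  · -- distant swaps: the bit at i is flipped by one and kept by the other
    have zi : swapAt x j i = x i := swapAt_fix (by omega) (by omega)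
    have zi1 : swapAt x j (i + 1) = x (i + 1) := swapAt_fix (by omega) (by omega)
    rw [hbZ, zi, zi1] at hEq1
    rw [decide_eq_decide] at hEq1
    have hne1 : x i ≠ x (i + 1) := hxne _ _ (by omega) (by omega) (by omega) (by omega) (by omega)
    rcases lt_or_gt_of_ne hne1 with h | h
    · exact absurd (hEq1.2 h) (by linarith)
    · exact absurd (hEq1.1 h) (by linarith)

end Distinct
section Realizer

/-- A canonical sequence realizing a given tree shape, with values in `(base, base + size]`. -/
def toL : BTree → ℤ → List ℤ
  | .nil, _ => []
  | .node l r, base => toL l (base + 1) ++ (base + 1) :: toL r (base + 1 + l.size)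

theorem toL_length : ∀ (T : BTree) (base : ℤ), (toL T base).length = T.size := by
  intro T
  induction T with
  | nil => intro base; rfl
  | node l r ihl ihr =>
    intro base
    simp [toL, BTree.size, ihl, ihr]
    omega

theorem toL_bounds : ∀ (T : BTree) (base : ℤ) (v : ℤ), v ∈ toL T base →
    base < v ∧ v ≤ base + T.size := by
  intro T
  induction T with
  | nil => intro base v hv; simp [toL] at hv
  | node l r ihl ihr =>
    intro base v hv
    simp only [toL, List.mem_append, List.mem_cons] at hv
    have hsz : (BTree.node l r).size = l.size + r.size + 1 := rfl
    rcases hv with hv | hv | hv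
    · have := ihl _ _ hv
      constructor
      · linarith
      · rw [hsz]; push_cast; linarith
    · subst hv
      constructor
      · linarith
      · rw [hsz]; push_cast; linarith [Int.ofNat_nonneg l.size, Int.ofNat_nonneg r.size]
    · have := ihr _ _ hv
      constructor
      · push_cast at this ⊢; linarith [Int.ofNat_nonneg l.size]
      · rw [hsz]; push_cast at this ⊢; linarith

theorem toL_nodup : ∀ (T : BTree) (base : ℤ), (toL T base).Nodup := by
  intro T
  induction T with
  | nil => intro base; simp [toL]
  | node l r ihl ihr =>
    intro base
    rw [toL, List.nodup_append]
    refine ⟨ihl _, ?_, ?_⟩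
    · rw [List.nodup_cons]
      refine ⟨fun h => ?_, ihr _⟩
      have := toL_bounds _ _ _ h
      linarith [Int.ofNat_nonneg l.size, this.1]
    · intro v hv w hv2 hvw
      subst hvw
      have h1 := toL_bounds _ _ _ hv
      rcases List.mem_cons.1 hv2 with h | h
      · subst h; linarith [h1.1]
      · have h2 := toL_bounds _ _ _ h
        linarith [h1.2, h2.1]

theorem indexOf_append_cons {l' : List ℤ} {v : ℤ} (h : v ∉ l') (rest : List ℤ) :
    (l' ++ v :: rest).idxOf v = l'.length := by
  induction l' with
  | nil => simp
  | cons a t ih =>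
    have ha : a ≠ v := fun hh => h (by rw [hh]; exact List.mem_cons_self)
    rw [List.cons_append, List.idxOf_cons_ne _ ha, ih (fun hh => h (List.mem_cons_of_mem _ hh))]
    rfl

theorem toL_ctree : ∀ (T : BTree) (base : ℤ), ctreeL (toL T base) = T := by
  intro T
  induction T with
  | nil => intro base; rfl
  | node l r ihl ihr =>
    intro base
    have hne : toL (BTree.node l r) base ≠ [] := by
      intro h
      have hlen := toL_length (BTree.node l r) base
      rw [h] at hlen
      have hpos := size_node_pos l r
      simp at hlen
      omega
    rw [ctreeL_split hne]
    have hmin : listMin (toL (BTree.node l r) base) = base + 1 := by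
      apply listMin_eq
      · rw [toL]
        exact List.mem_append_right _ List.mem_cons_self
      · intro v hv
        rw [toL] at hv
        rcases List.mem_append.1 hv with h | h
        · linarith [(toL_bounds _ _ _ h).1]
        · rcases List.mem_cons.1 h with h | h
          · omega
          · linarith [(toL_bounds _ _ _ h).1, Int.ofNat_nonneg l.size]
    have hnotmem : (base + 1) ∉ toL l (base + 1) := by
      intro h
      linarith [(toL_bounds _ _ _ h).1]
    have hidx : minIdx (toL (BTree.node l r) base) = l.size := by
      rw [minIdx, hmin, toL, indexOf_append_cons hnotmem, toL_length]
    rw [hidx, toL]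
    have htake : (toL l (base + 1) ++ (base + 1) :: toL r (base + 1 + l.size)).take l.size
        = toL l (base + 1) := by
      rw [← toL_length l (base + 1), List.take_left]
    have hdrop : (toL l (base + 1) ++ (base + 1) :: toL r (base + 1 + l.size)).drop (l.size + 1)
        = toL r (base + 1 + l.size) := by
      rw [show toL l (base + 1) ++ (base + 1) :: toL r (base + 1 + l.size)
          = (toL l (base + 1) ++ [base + 1]) ++ toL r (base + 1 + l.size) from by simp,
        show l.size + 1 = (toL l (base + 1) ++ [base + 1]).length from by
          rw [List.length_append, toL_length]; rfl,
        List.drop_left]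
    rw [htake, hdrop, ihl, ihr]

theorem exists_realizer (T : BTree) (m : ℕ) (hT : T.size = m) :
    ∃ x : ℕ → ℤ, Set.InjOn x (Set.Icc 1 m) ∧ ctreeOf m x = T := by
  refine ⟨fun n => (toL T 0).getD (n - 1) 0, ?_, ?_⟩
  · intro p hp q hq heq
    simp only at heq
    have hp' := hp.1
    have hp'' := hp.2
    have hq' := hq.1
    have hq'' := hq.2
    have hlen : (toL T 0).length = m := by rw [toL_length, hT]
    have hp1 : p - 1 < (toL T 0).length := by rw [hlen]; omega
    have hq1 : q - 1 < (toL T 0).length := by rw [hlen]; omega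
    rw [List.getD_eq_getElem _ _ hp1, List.getD_eq_getElem _ _ hq1] at heq
    have := (List.Nodup.getElem_inj_iff (toL_nodup T 0)).1 heq
    omega
  · have hseq : seqList (fun n => (toL T 0).getD (n - 1) 0) 1 m = toL T 0 := by
      apply List.ext_getElem
      · rw [seqList_length, toL_length, hT]; omega
      · intro k hk1 hk2
        rw [seqList_getElem (by rw [seqList_length] at hk1; omega)]
        show (toL T 0).getD (1 + k - 1) 0 = _
        rw [show 1 + k - 1 = k from by omega, List.getD_eq_getElem _ _ hk2]
    rw [ctreeOf, hseq, toL_ctree]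

end Realizer
section Count

def nbrsSum (T : BTree) : ℕ := ∑ j ∈ Finset.range (T.size - 1), (nbrs T j).card

theorem size_node (L R : BTree) : (BTree.node L R).size = L.size + R.size + 1 := rfl

theorem LMP_pos {T : BTree} (h : T ≠ .nil) : 1 ≤ T.LMP := by
  cases T with
  | nil => exact absurd rfl h
  | node l r => rw [BTree.LMP]; omega

theorem RMP_pos {T : BTree} (h : T ≠ .nil) : 1 ≤ T.RMP := by
  cases T with
  | nil => exact absurd rfl h
  | node l r => rw [BTree.RMP]; omega

theorem size_zero_iff {T : BTree} : T.size = 0 ↔ T = .nil := by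
  cases T with
  | nil => simp [BTree.size]
  | node l r => simp [BTree.size]

theorem nbrs_card_le₁ {L R : BTree} {j : ℕ} (h : j + 1 < L.size) :
    (nbrs (.node L R) j).card ≤ (nbrs L j).card := by
  rw [nbrs, if_pos h]; exact Finset.card_image_le

theorem nbrs_card_le₂ {L R : BTree} {j : ℕ} (h : j + 1 = L.size) :
    (nbrs (.node L R) j).card ≤ R.LMP + 1 := by
  rw [nbrs, if_neg (by omega), if_pos h]
  exact le_trans Finset.card_image_le (by rw [Finset.card_range])

theorem nbrs_card_le₃ {L R : BTree} {j : ℕ} (h : j = L.size) :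
    (nbrs (.node L R) j).card ≤ L.RMP + 1 := by
  rw [nbrs, if_neg (by omega), if_neg (by omega), if_pos h]
  exact le_trans Finset.card_image_le (by rw [Finset.card_range])

theorem nbrs_card_le₄ {L R : BTree} {j : ℕ} (h : L.size < j) :
    (nbrs (.node L R) j).card ≤ (nbrs R (j - L.size - 1)).card := by
  rw [nbrs, if_neg (by omega), if_neg (by omega), if_neg (by omega)]
  exact Finset.card_image_le

theorem sum_range_add (f : ℕ → ℕ) (n : ℕ) : ∀ m : ℕ,
    ∑ j ∈ Finset.range (n + m), f j
      = (∑ j ∈ Finset.range n, f j) + ∑ j ∈ Finset.range m, f (n + j) := by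
  intro m
  induction m with
  | zero => simp
  | succ m ih =>
    rw [show n + (m + 1) = (n + m) + 1 from rfl, Finset.sum_range_succ, ih,
      Finset.sum_range_succ]
    omega

theorem nbrs_sum_le (L R : BTree) :
    nbrsSum (.node L R) ≤ nbrsSum L + nbrsSum R +
      (if L.size = 0 then 0 else R.LMP + 1) + (if R.size = 0 then 0 else L.RMP + 1) := by
  by_cases ha : L.size = 0 <;> by_cases hb : R.size = 0
  · rw [nbrsSum, show (BTree.node L R).size - 1 = 0 from by rw [size_node]; omega]
    simp
  · rw [if_pos ha, if_neg hb, nbrsSum,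
      show (BTree.node L R).size - 1 = 1 + (R.size - 1) from by rw [size_node]; omega,
      sum_range_add, Finset.sum_range_one]
    have h0 : (nbrs (BTree.node L R) 0).card ≤ L.RMP + 1 := nbrs_card_le₃ (by omega)
    have h1 : ∑ j ∈ Finset.range (R.size - 1), (nbrs (BTree.node L R) (1 + j)).card
        ≤ ∑ j ∈ Finset.range (R.size - 1), (nbrs R j).card := by
      apply Finset.sum_le_sum
      intro j hj
      have := nbrs_card_le₄ (L := L) (R := R) (j := 1 + j) (by omega)
      rwa [show 1 + j - L.size - 1 = j from by omega] at this
    simp only [nbrsSum]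
    omega
  · rw [if_neg ha, if_pos hb, nbrsSum,
      show (BTree.node L R).size - 1 = (L.size - 1) + 1 from by rw [size_node]; omega,
      Finset.sum_range_succ]
    have h0 : (nbrs (BTree.node L R) (L.size - 1)).card ≤ R.LMP + 1 :=
      nbrs_card_le₂ (by omega)
    have h1 : ∑ j ∈ Finset.range (L.size - 1), (nbrs (BTree.node L R) j).card
        ≤ ∑ j ∈ Finset.range (L.size - 1), (nbrs L j).card := by
      apply Finset.sum_le_sum
      intro j hj
      rw [Finset.mem_range] at hj
      exact nbrs_card_le₁ (by omega)
    simp only [nbrsSum]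
    omega
  · rw [if_neg ha, if_neg hb, nbrsSum,
      show (BTree.node L R).size - 1 = (L.size + 1) + (R.size - 1) from by
        rw [size_node]; omega,
      sum_range_add, Finset.sum_range_succ,
      show L.size = (L.size - 1) + 1 from by omega, Finset.sum_range_succ]
    rw [show L.size - 1 + 1 = L.size from by omega]
    have h0 : (nbrs (BTree.node L R) (L.size - 1)).card ≤ R.LMP + 1 :=
      nbrs_card_le₂ (by omega)
    have h0' : (nbrs (BTree.node L R) L.size).card ≤ L.RMP + 1 := nbrs_card_le₃ rfl
    have h1 : ∑ j ∈ Finset.range (L.size - 1), (nbrs (BTree.node L R) j).card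
        ≤ ∑ j ∈ Finset.range (L.size - 1), (nbrs L j).card := by
      apply Finset.sum_le_sum
      intro j hj
      rw [Finset.mem_range] at hj
      exact nbrs_card_le₁ (by omega)
    have h2 : ∑ j ∈ Finset.range (R.size - 1), (nbrs (BTree.node L R) (L.size + 1 + j)).card
        ≤ ∑ j ∈ Finset.range (R.size - 1), (nbrs R j).card := by
      apply Finset.sum_le_sum
      intro j hj
      have := nbrs_card_le₄ (L := L) (R := R) (j := L.size + 1 + j) (by omega)
      rwa [show L.size + 1 + j - L.size - 1 = j from by omega] at this
    simp only [nbrsSum]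
    omega

theorem gbound : ∀ T : BTree, T ≠ .nil →
    nbrsSum T + T.RMP + T.LMP + 1 ≤ 3 * T.size := by
  intro T
  induction T with
  | nil => intro h; exact absurd rfl h
  | node L R ihL ihR =>
    intro _
    have hs := nbrs_sum_le L R
    have hsz := size_node L R
    have hLMP : (BTree.node L R).LMP = L.LMP + 1 := rfl
    have hRMP : (BTree.node L R).RMP = R.RMP + 1 := rfl
    have hns : BTree.nil.size = 0 := rfl
    have hnr : BTree.nil.RMP = 0 := rfl
    have hnl : BTree.nil.LMP = 0 := rfl
    by_cases ha : L.size = 0 <;> by_cases hb : R.size = 0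
    · rw [if_pos ha, if_pos hb] at hs
      have hL : L = .nil := size_zero_iff.1 ha
      have hR : R = .nil := size_zero_iff.1 hb
      subst hL; subst hR
      simp [nbrsSum, BTree.size] at hs ⊢
      rw [hLMP, hRMP]
      simp [BTree.LMP, BTree.RMP, BTree.size]
    · rw [if_pos ha, if_neg hb] at hs
      have hL : L = .nil := size_zero_iff.1 ha
      subst hL
      have hR : R ≠ .nil := fun h => hb (by rw [h]; rfl)
      have := ihR hR
      have hLR := LMP_pos hR
      have hnil : nbrsSum BTree.nil = 0 := by simp [nbrsSum, BTree.size]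
      rw [hnil] at hs
      rw [hLMP, hRMP]
      have hRMPnil : BTree.nil.RMP = 0 := rfl
      have hLMPnil : BTree.nil.LMP = 0 := rfl
      rw [hRMPnil] at hs
      omega
    · rw [if_neg ha, if_pos hb] at hs
      have hR : R = .nil := size_zero_iff.1 hb
      subst hR
      have hL : L ≠ .nil := fun h => ha (by rw [h]; rfl)
      have := ihL hL
      have hLR := RMP_pos hL
      have hnil : nbrsSum BTree.nil = 0 := by simp [nbrsSum, BTree.size]
      rw [hnil] at hs
      rw [hLMP, hRMP]
      have hLMPnil : BTree.nil.LMP = 0 := rfl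
      rw [hLMPnil] at hs
      omega
    · have hL : L ≠ .nil := fun h => ha (by rw [h]; rfl)
      have hR : R ≠ .nil := fun h => hb (by rw [h]; rfl)
      have h1 := ihL hL
      have h2 := ihR hR
      rw [if_neg ha, if_neg hb] at hs
      rw [hLMP, hRMP]
      omega

theorem nbrsSum_le_final (T : BTree) (h2 : 2 ≤ T.size) : nbrsSum T + 5 ≤ 3 * T.size := by
  cases T with
  | nil => simp [BTree.size] at h2
  | node L R =>
    have hs := nbrs_sum_le L R
    have hsz := size_node L R
    have hns : BTree.nil.size = 0 := rfl
    have hnr : BTree.nil.RMP = 0 := rfl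
    have hnl : BTree.nil.LMP = 0 := rfl
    by_cases ha : L.size = 0 <;> by_cases hb : R.size = 0
    · omega
    · have hR : R ≠ .nil := fun h => hb (by rw [h]; rfl)
      have := gbound R hR
      have := LMP_pos hR
      have := RMP_pos hR
      rw [if_pos ha, if_neg hb] at hs
      have hL : L = .nil := size_zero_iff.1 ha
      subst hL
      have hnil : nbrsSum BTree.nil = 0 := by simp [nbrsSum, BTree.size]
      have hRMPnil : BTree.nil.RMP = 0 := rfl
      rw [hnil, hRMPnil] at hs
      omega
    · have hL : L ≠ .nil := fun h => ha (by rw [h]; rfl)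
      have := gbound L hL
      have := LMP_pos hL
      have := RMP_pos hL
      rw [if_neg ha, if_pos hb] at hs
      have hR : R = .nil := size_zero_iff.1 hb
      subst hR
      have hnil : nbrsSum BTree.nil = 0 := by simp [nbrsSum, BTree.size]
      have hLMPnil : BTree.nil.LMP = 0 := rfl
      rw [hnil, hLMPnil] at hs
      omega
    · have hL : L ≠ .nil := fun h => ha (by rw [h]; rfl)
      have hR : R ≠ .nil := fun h => hb (by rw [h]; rfl)
      have g1 := gbound L hL
      have g2 := gbound R hR
      have := LMP_pos hL
      have := RMP_pos hR
      rw [if_neg ha, if_neg hb] at hs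
      omega

end Count

theorem stmt10 (m : ℕ) (hm : 2 ≤ m) (T : BTree) (hT : T.size = m) :
    m - 1 ≤ (ng m T).ncard ∧ (ng m T).ncard ≤ 3 * (m - 2) + 1 := by
  obtain ⟨x₀, hx₀, hc₀⟩ := exists_realizer T m hT
  have hsub : ng m T ⊆ ↑((Finset.range (m - 1)).biUnion (fun j => nbrs T j)) := by
    intro S hS
    rw [ng, Set.mem_iUnion] at hS
    obtain ⟨i, hi1, hi2, x, hx, hcx, hSeq⟩ := hS
    subst hSeq
    have hctr : ctr x 1 m = T := by rw [← ctreeOf_eq_ctr hx, hcx]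
    have hmem := ctr_swap_mem (a := 1) (b := m) le_rfl hi1 hi2 hx
    rw [hctr] at hmem
    rw [ctreeOf_eq_ctr (swapAt_injOn hx hi1 hi2)]
    exact Finset.mem_coe.2 (Finset.mem_biUnion.2 ⟨i - 1, Finset.mem_range.2 (by omega), hmem⟩)
  have hfin : (ng m T).Finite :=
    Set.Finite.subset (Finset.finite_toSet _) hsub
  constructor
  · -- lower bound
    have hval : ∀ i : ℕ, 1 ≤ i → i + 1 ≤ m →
        ctreeOf m (swapAt x₀ i) = ctr (swapAt x₀ i) 1 m := by
      intro i h1 h2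
      exact ctreeOf_eq_ctr (swapAt_injOn hx₀ h1 h2)
    have hinj : Set.InjOn (fun i => ctreeOf m (swapAt x₀ i)) ↑(Finset.Icc 1 (m - 1)) := by
      intro i hi j hj hne
      simp only [Finset.coe_Icc, Set.mem_Icc] at hi hj
      by_contra hne2
      simp only at hne
      rw [hval i hi.1 (by omega), hval j hj.1 (by omega)] at hne
      rcases Nat.lt_trichotomy i j with h | h | h
      · exact swap_trees_ne hx₀ hi.1 h (by omega) hne
      · exact hne2 h
      · exact swap_trees_ne hx₀ hj.1 h (by omega) hne.symm
    have hcard : ((Finset.Icc 1 (m - 1)).image (fun i => ctreeOf m (swapAt x₀ i))).card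
        = m - 1 := by
      rw [Finset.card_image_of_injOn hinj, Nat.card_Icc]
      omega
    have hsubF : ↑((Finset.Icc 1 (m - 1)).image (fun i => ctreeOf m (swapAt x₀ i)))
        ⊆ ng m T := by
      intro S hS
      rw [Finset.coe_image] at hS
      obtain ⟨i, hi, rfl⟩ := hS
      simp only [Finset.coe_Icc, Set.mem_Icc] at hi
      rw [ng, Set.mem_iUnion]
      exact ⟨i, hi.1, by omega, x₀, hx₀, hc₀, rfl⟩
    calc m - 1
        = ((Finset.Icc 1 (m - 1)).image (fun i => ctreeOf m (swapAt x₀ i))).card := hcard.symm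
      _ = (↑((Finset.Icc 1 (m - 1)).image (fun i => ctreeOf m (swapAt x₀ i))) : Set BTree).ncard :=
          (Set.ncard_coe_finset _).symm
      _ ≤ (ng m T).ncard := Set.ncard_le_ncard hsubF hfin
  · -- upper bound
    have h1 : (ng m T).ncard
        ≤ (((Finset.range (m - 1)).biUnion (fun j => nbrs T j) : Finset BTree) : Set BTree).ncard :=
      Set.ncard_le_ncard hsub (Finset.finite_toSet _)
    rw [Set.ncard_coe_finset] at h1
    have h2 : ((Finset.range (m - 1)).biUnion (fun j => nbrs T j)).card
        ≤ ∑ j ∈ Finset.range (m - 1), (nbrs T j).card := Finset.card_biUnion_le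
    have h3 := nbrsSum_le_final T (by omega)
    have h4 : nbrsSum T = ∑ j ∈ Finset.range (m - 1), (nbrs T j).card := by
      rw [nbrsSum, hT]
    rw [hT] at h3
    omega
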